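/- Let g : R^{≥0} → R^{≥0} be increasing with g(1) > 0, and suppose the proportional allocation mechanism with parameter g achieves fair value at least r ∈ (0,1) on every single-user instance with k advertisers. Then for every B ≥ 1, applying the mechanism to bids (B, 1, 1, …, 1) yields g(B)·B/(g(B) + (k-1)g(1)) + (k-1)g(1)/(g(B)+(k-1)g(1)) ≥ r·B, which for B > 1/r implies g(B)/g(1) ≥ (k-1)·(rB − 1)/(B − rB). -/

import Mathlib

/-- If a proportional allocation mechanism with parameter `g` achieves fair value at
least `r` on every single-user instance with `k` advertisers, then on the bid vector
`(B, 1, …, 1)` the guaranteed value inequality holds, and for `B > 1/r` this forces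
`g(B)/g(1) ≥ (k-1)·(rB − 1)/(B − rB)`. -/
theorem stmt_18 (k : ℕ) (hk : 2 ≤ k) (g : ℝ → ℝ) (hmono : Monotone g) (hg1 : 0 < g 1)
    (r : ℝ) (hr0 : 0 < r) (hr1 : r < 1)
    (hfv : ∀ b : Fin k → ℝ, (∀ i, 0 < b i) →
      ∀ Bmax : ℝ, (∀ i, b i ≤ Bmax) → (∃ i, b i = Bmax) →
        r * Bmax ≤ ∑ i, g (b i) / (∑ j, g (b j)) * b i) :
    ∀ B : ℝ, 1 ≤ B →
      (r * B ≤ g B * B / (g B + ((k : ℝ) - 1) * g 1)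
        + ((k : ℝ) - 1) * g 1 / (g B + ((k : ℝ) - 1) * g 1)) ∧
      (1 / r < B → ((k : ℝ) - 1) * (r * B - 1) / (B - r * B) ≤ g B / g 1) := by
  intro B hB
  have hgB : 0 < g B := lt_of_lt_of_le hg1 (hmono hB)
  have hk1 : (1:ℝ) ≤ (k:ℝ) - 1 := by
    have : (2:ℝ) ≤ (k:ℝ) := by exact_mod_cast hk
    linarith
  have hS : 0 < g B + ((k:ℝ) - 1) * g 1 := by nlinarith
  have i0 : Fin k := ⟨0, by omega⟩
  set b : Fin k → ℝ := fun i => if i = i0 then B else 1 with hb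
  have hpos : ∀ i, 0 < b i := by
    intro i; simp only [hb]; split <;> linarith
  have hle : ∀ i, b i ≤ B := by
    intro i; simp only [hb]; split <;> linarith
  have hex : ∃ i, b i = B := ⟨i0, by simp [hb]⟩
  have hsum : ∑ j, g (b j) = g B + ((k:ℝ) - 1) * g 1 := by
    have h : ∀ j : Fin k, g (b j) = g 1 + (if j = i0 then g B - g 1 else 0) := by
      intro j; simp only [hb]; split <;> simp
    rw [Finset.sum_congr rfl (fun j _ => h j), Finset.sum_add_distrib,
      Finset.sum_const, Finset.sum_ite_eq' Finset.univ i0 (fun _ => g B - g 1),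
      if_pos (Finset.mem_univ i0), Finset.card_univ, Fintype.card_fin, nsmul_eq_mul]
    ring
  have key := hfv b hpos B hle hex
  simp only [hsum] at key
  have hval : ∑ i, g (b i) / (g B + ((k:ℝ) - 1) * g 1) * b i
      = g B * B / (g B + ((k:ℝ) - 1) * g 1)
        + ((k:ℝ) - 1) * g 1 / (g B + ((k:ℝ) - 1) * g 1) := by
    have h : ∀ i : Fin k, g (b i) / (g B + ((k:ℝ) - 1) * g 1) * b i
        = g 1 / (g B + ((k:ℝ) - 1) * g 1)
          + (if i = i0 then g B * B / (g B + ((k:ℝ) - 1) * g 1)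
              - g 1 / (g B + ((k:ℝ) - 1) * g 1) else 0) := by
      intro i; simp only [hb]; split <;> simp <;> ring
    rw [Finset.sum_congr rfl (fun i _ => h i), Finset.sum_add_distrib,
      Finset.sum_const,
      Finset.sum_ite_eq' Finset.univ i0
        (fun _ => g B * B / (g B + ((k:ℝ) - 1) * g 1)
          - g 1 / (g B + ((k:ℝ) - 1) * g 1)),
      if_pos (Finset.mem_univ i0), Finset.card_univ, Fintype.card_fin, nsmul_eq_mul]
    field_simp
    ring
  rw [hval] at key
  refine ⟨key, fun hBr => ?_⟩
  have hB0 : 0 < B := by linarith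
  have hrB : 1 < r * B := by
    have := (div_lt_iff₀ hr0).mp (by linarith : 1 / r < B)
    linarith [this]
  have hBrB : 0 < B - r * B := by nlinarith
  have h2 : r * B * (g B + ((k:ℝ) - 1) * g 1) ≤ g B * B + ((k:ℝ) - 1) * g 1 := by
    rw [← add_div] at key
    exact (le_div_iff₀ hS).mp key
  rw [div_le_div_iff₀ hBrB hg1]
  nlinarith [h2]
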